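/- Let F_{n-1} be the free group on generators v₁, …, v_{n-1}, with n ≥ 4. Define ρ_D on braid generators by: ρ_D(α₁) sends v₁ ↦ v₁ and v_j ↦ v₁⁻¹ v_j for j ≠ 1; and for 2 ≤ i ≤ n-1, ρ_D(α_i) sends v_{i-1} ↦ v_i, v_i ↦ v_i v_{i-1}⁻¹ v_i, and v_j ↦ v_j for j ∉ {i-1, i}. Then each ρ_D(α_i) is an automorphism of F_{n-1} and these automorphisms satisfy the braid relations, so ρ_D extends to a homomorphism B_n → Aut(F_{n-1}). -/

import Mathlib

namespace Stmt11Aux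
open FreeGroup

variable {m : ℕ}

def p (i : Fin m) : Fin m := ⟨(i : ℕ) - 1, lt_of_le_of_lt (Nat.sub_le _ _) i.isLt⟩

@[simp] lemma p_val (i : Fin m) : ((p i : Fin m) : ℕ) = (i : ℕ) - 1 := rfl

lemma p_eq {i j : Fin m} (h : (j : ℕ) + 1 = (i : ℕ)) : p i = j := by
  apply Fin.ext; simp [p]; omega

def f (i j : Fin m) : FreeGroup (Fin m) :=
  if (i : ℕ) = 0 then (if j = i then of j else (of i)⁻¹ * of j)
  else if (j : ℕ) + 1 = (i : ℕ) then of i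
  else if j = i then of i * (of (p i))⁻¹ * of i
  else of j

def g (i j : Fin m) : FreeGroup (Fin m) :=
  if (i : ℕ) = 0 then (if j = i then of j else of i * of j)
  else if (j : ℕ) + 1 = (i : ℕ) then of j * (of i)⁻¹ * of j
  else if j = i then of (p i)
  else of j

lemma gf (i j : Fin m) : lift (g i) (f i j) = of j := by
  rcases Nat.eq_zero_or_pos (i : ℕ) with hi | hi
  · by_cases hj : j = i
    · subst hj; simp [f, g, hi]
    · simp [f, g, hi, hj]
  · have hi' : ¬ ((i : ℕ) = 0) := by omega
    by_cases h1 : (j : ℕ) + 1 = (i : ℕ)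
    · have : p i = j := p_eq h1
      simp [f, g, hi', h1, this]
    · by_cases hj : j = i
      · subst hj
        have hp1 : ((p j : Fin m) : ℕ) + 1 = (j : ℕ) := by simp [p]; omega
        have hpj : ¬ (p j = j) := by
          intro h; have := congrArg (Fin.val) h; simp [p] at this; omega
        have hx : 1 + ((j : ℕ) - 1) = (j : ℕ) := by omega
        have hx' : (j : ℕ) - 1 + 1 = (j : ℕ) := by omega
        simp [f, g, hi', h1, hp1, hpj, hx, hx']
      · simp [f, g, hi', h1, hj]

lemma fg (i j : Fin m) : lift (f i) (g i j) = of j := by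
  rcases Nat.eq_zero_or_pos (i : ℕ) with hi | hi
  · by_cases hj : j = i
    · subst hj; simp [f, g, hi]
    · simp [f, g, hi, hj]
  · have hi' : ¬ ((i : ℕ) = 0) := by omega
    by_cases h1 : (j : ℕ) + 1 = (i : ℕ)
    · have hji : ¬ (j = i) := by intro h; subst h; omega
      have hii : ¬ ((i : ℕ) + 1 = (i : ℕ)) := by omega
      have hpi : p i = j := p_eq h1
      simp [f, g, hi', h1, hji, hii, hpi]
    · by_cases hj : j = i
      · subst hj
        have hp1 : ((p j : Fin m) : ℕ) + 1 = (j : ℕ) := by simp [p]; omega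
        have hx : 1 + ((j : ℕ) - 1) = (j : ℕ) := by omega
        have hx' : (j : ℕ) - 1 + 1 = (j : ℕ) := by omega
        simp [f, g, hi', h1, hp1, hx, hx']
      · simp [f, g, hi', h1, hj]

def F (i : Fin m) : MulAut (FreeGroup (Fin m)) :=
  MonoidHom.toMulEquiv (lift (f i)) (lift (g i))
    (FreeGroup.ext_hom _ _ fun j => by simp [gf])
    (FreeGroup.ext_hom _ _ fun j => by simp [fg])

lemma F_apply (i : Fin m) (x : FreeGroup (Fin m)) : F i x = lift (f i) x := rfl

lemma F_of (i j : Fin m) : F i (of j) = f i j := by rw [F_apply, lift_apply_of]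

lemma F0_fix {i : Fin m} (hi : (i : ℕ) = 0) : F i (of i) = of i := by
  simp [F_of, f, hi]

lemma F0_mul {i j : Fin m} (hi : (i : ℕ) = 0) (hj : j ≠ i) :
    F i (of j) = (of i)⁻¹ * of j := by
  simp [F_of, f, hi, hj]

lemma F_succ {i j : Fin m} (h : (j : ℕ) + 1 = (i : ℕ)) : F i (of j) = of i := by
  have hi' : ¬ ((i : ℕ) = 0) := by omega
  simp [F_of, f, hi', h]

lemma F_self {i j : Fin m} (h : (j : ℕ) + 1 = (i : ℕ)) :
    F i (of i) = of i * (of j)⁻¹ * of i := by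
  have hi' : ¬ ((i : ℕ) = 0) := by omega
  have hii : ¬ ((i : ℕ) + 1 = (i : ℕ)) := by omega
  have hpi : p i = j := p_eq h
  simp [F_of, f, hi', hii, hpi]

lemma F_other {i j : Fin m} (hi : 1 ≤ (i : ℕ)) (h1 : (j : ℕ) + 1 ≠ (i : ℕ))
    (h2 : j ≠ i) : F i (of j) = of j := by
  have hi' : ¬ ((i : ℕ) = 0) := by omega
  simp [F_of, f, hi', h1, h2]


lemma braid_adj {i j : Fin m} (h : (i : ℕ) + 1 = (j : ℕ)) :
    F i * F j * F i = F j * F i * F j := by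
  have hji : j ≠ i := Fin.ne_of_val_ne (by omega)
  have hj1 : 1 ≤ (j : ℕ) := by omega
  apply MulEquiv.toMonoidHom_injective
  apply FreeGroup.ext_hom
  intro k
  show F i (F j (F i (of k))) = F j (F i (F j (of k)))
  rcases Nat.eq_zero_or_pos (i : ℕ) with hi | hi
  · have A1 : F i (of i) = of i := F0_fix hi
    have A2 : F i (of j) = (of i)⁻¹ * of j := F0_mul hi hji
    have A3 : F j (of i) = of j := F_succ h
    have A4 : F j (of j) = of j * (of i)⁻¹ * of j := F_self h
    by_cases hk1 : k = i
    · subst hk1; simp only [_root_.map_mul, _root_.map_inv, A1, A2, A3, A4]; group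
    · by_cases hk2 : k = j
      · subst hk2; simp only [_root_.map_mul, _root_.map_inv, A1, A2, A3, A4]; group
      · have A5 : F i (of k) = (of i)⁻¹ * of k := F0_mul hi hk1
        have A6 : F j (of k) = of k :=
          F_other hj1 (fun hh => hk1 (Fin.ext (by omega))) hk2
        simp only [_root_.map_mul, _root_.map_inv, A1, A2, A3, A4, A5, A6]; group
  · have hpi1 : ((p i : Fin m) : ℕ) + 1 = (i : ℕ) := by simp [p]; omega
    have B1 : F i (of (p i)) = of i := F_succ hpi1
    have B2 : F i (of i) = of i * (of (p i))⁻¹ * of i := F_self hpi1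
    have B3 : F i (of j) = of j := F_other hi (by omega) hji
    have B4 : F j (of (p i)) = of (p i) :=
      F_other hj1 (by simp [p]; omega) (Fin.ne_of_val_ne (by simp [p]; omega))
    have B5 : F j (of i) = of j := F_succ h
    have B6 : F j (of j) = of j * (of i)⁻¹ * of j := F_self h
    by_cases hk0 : k = p i
    · subst hk0; simp only [_root_.map_mul, _root_.map_inv, B1, B2, B3, B4, B5, B6]
    · by_cases hk1 : k = i
      · subst hk1; simp only [_root_.map_mul, _root_.map_inv, B1, B2, B3, B4, B5, B6]
      · by_cases hk2 : k = j
        · subst hk2; simp only [_root_.map_mul, _root_.map_inv, B1, B2, B3, B4, B5, B6]; group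
        · have hkv : (k : ℕ) ≠ ((p i : Fin m) : ℕ) := fun hh => hk0 (Fin.ext hh)
          have hki : (k : ℕ) ≠ (i : ℕ) := Fin.val_ne_of_ne hk1
          have C1 : F i (of k) = of k := F_other hi (by simp [p] at hkv; omega) hk1
          have C2 : F j (of k) = of k := F_other hj1 (by omega) hk2
          simp only [C1, C2]

lemma braid_comm {i j : Fin m} (h : (i : ℕ) + 2 ≤ (j : ℕ)) :
    F i * F j = F j * F i := by
  have hij : i ≠ j := Fin.ne_of_val_ne (by omega)
  have hji : j ≠ i := Fin.ne_of_val_ne (by omega)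
  have hj1 : 1 ≤ (j : ℕ) := by omega
  have hpj1 : ((p j : Fin m) : ℕ) + 1 = (j : ℕ) := by simp [p]; omega
  have E2 : F j (of (p j)) = of j := F_succ hpj1
  have E3 : F j (of j) = of j * (of (p j))⁻¹ * of j := F_self hpj1
  have E1 : F j (of i) = of i := F_other hj1 (by omega) hij
  apply MulEquiv.toMonoidHom_injective
  apply FreeGroup.ext_hom
  intro k
  show F i (F j (of k)) = F j (F i (of k))
  rcases Nat.eq_zero_or_pos (i : ℕ) with hi | hi
  · have D1 : F i (of i) = of i := F0_fix hi
    have hpji : p j ≠ i := Fin.ne_of_val_ne (by simp [p]; omega)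
    have D2 : F i (of (p j)) = (of i)⁻¹ * of (p j) := F0_mul hi hpji
    have D3 : F i (of j) = (of i)⁻¹ * of j := F0_mul hi hji
    by_cases hk1 : k = i
    · subst hk1; simp only [_root_.map_mul, _root_.map_inv, D1, D2, D3, E1, E2, E3]
    · by_cases hk2 : k = p j
      · subst hk2; simp only [_root_.map_mul, _root_.map_inv, D1, D2, D3, E1, E2, E3]
      · by_cases hk3 : k = j
        · subst hk3; simp only [_root_.map_mul, _root_.map_inv, D1, D2, D3, E1, E2, E3]; group
        · have hkv : (k : ℕ) ≠ ((p j : Fin m) : ℕ) := fun hh => hk2 (Fin.ext hh)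
          have D4 : F i (of k) = (of i)⁻¹ * of k := F0_mul hi hk1
          have E4 : F j (of k) = of k := F_other hj1 (by simp [p] at hkv; omega) hk3
          simp only [_root_.map_mul, _root_.map_inv, D4, E1, E4]
  · have hpi1 : ((p i : Fin m) : ℕ) + 1 = (i : ℕ) := by simp [p]; omega
    have G1 : F i (of (p i)) = of i := F_succ hpi1
    have G2 : F i (of i) = of i * (of (p i))⁻¹ * of i := F_self hpi1
    have G3 : F i (of (p j)) = of (p j) :=
      F_other hi (by simp [p]; omega) (Fin.ne_of_val_ne (by simp [p]; omega))
    have G4 : F i (of j) = of j := F_other hi (by omega) hji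
    have E5 : F j (of (p i)) = of (p i) :=
      F_other hj1 (by simp [p]; omega) (Fin.ne_of_val_ne (by simp [p]; omega))
    by_cases hk0 : k = p i
    · subst hk0; simp only [_root_.map_mul, _root_.map_inv, G1, G2, G3, G4, E1, E2, E3, E5]
    · by_cases hk1 : k = i
      · subst hk1; simp only [_root_.map_mul, _root_.map_inv, G1, G2, G3, G4, E1, E2, E3, E5]
      · by_cases hk2 : k = p j
        · subst hk2; simp only [_root_.map_mul, _root_.map_inv, G1, G2, G3, G4, E1, E2, E3, E5]
        · by_cases hk3 : k = j
          · subst hk3; simp only [_root_.map_mul, _root_.map_inv, G1, G2, G3, G4, E1, E2, E3, E5]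
          · have hkv : (k : ℕ) ≠ ((p j : Fin m) : ℕ) := fun hh => hk2 (Fin.ext hh)
            have hkv' : (k : ℕ) ≠ ((p i : Fin m) : ℕ) := fun hh => hk0 (Fin.ext hh)
            have C1 : F i (of k) = of k :=
              F_other hi (by simp [p] at hkv'; omega) hk1
            have C2 : F j (of k) = of k :=
              F_other hj1 (by simp [p] at hkv; omega) hk3
            simp only [C1, C2]

end Stmt11Aux




/-- Braid relators on `k` generators `α₀, …, α_{k-1}` (the braid group on `k+1` strands). -/
def braidRels (k : ℕ) : Set (FreeGroup (Fin k)) :=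
  {r | ∃ i j : Fin k,
    ((i : ℕ) + 1 = j ∧
      r = FreeGroup.of i * FreeGroup.of j * FreeGroup.of i *
        (FreeGroup.of j * FreeGroup.of i * FreeGroup.of j)⁻¹) ∨
    ((i : ℕ) + 2 ≤ j ∧
      r = FreeGroup.of i * FreeGroup.of j * (FreeGroup.of i)⁻¹ * (FreeGroup.of j)⁻¹)}

/-- with `n = m+1 ≥ 4` (so `m ≥ 3`), on the free group `F` of rank `m = n-1`
(generators `v₀, …, v_{m-1}` standing for `v₁, …, v_{n-1}`), the maps `ρ_D(αᵢ)` defined by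
`ρ_D(α₁) : v₁ ↦ v₁, v_j ↦ v₁⁻¹ v_j (j ≠ 1)` and, for `i ≥ 2`,
`ρ_D(αᵢ) : v_{i-1} ↦ vᵢ, vᵢ ↦ vᵢ v_{i-1}⁻¹ vᵢ, v_j ↦ v_j` otherwise (here the braid
generator of `0`-index `i` is `α_{i+1}`), are automorphisms satisfying the braid
relations, hence extend to a homomorphism from the braid group on `n` strands to `Aut(F)`. -/
theorem stmt11 (m : ℕ) (hm : 3 ≤ m) :
    ∃ φ : Fin m → MulAut (FreeGroup (Fin m)),
      (∀ i j : Fin m, (i : ℕ) = 0 → j = i → φ i (FreeGroup.of j) = FreeGroup.of j) ∧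
      (∀ i j : Fin m, (i : ℕ) = 0 → j ≠ i →
        φ i (FreeGroup.of j) = (FreeGroup.of i)⁻¹ * FreeGroup.of j) ∧
      (∀ i j : Fin m, (j : ℕ) + 1 = i →
        φ i (FreeGroup.of j) = FreeGroup.of i ∧
        φ i (FreeGroup.of i) = FreeGroup.of i * (FreeGroup.of j)⁻¹ * FreeGroup.of i) ∧
      (∀ i j : Fin m, 1 ≤ (i : ℕ) → (j : ℕ) + 1 ≠ (i : ℕ) → j ≠ i →
        φ i (FreeGroup.of j) = FreeGroup.of j) ∧
      (∀ i j : Fin m, (i : ℕ) + 1 = j → φ i * φ j * φ i = φ j * φ i * φ j) ∧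
      (∀ i j : Fin m, (i : ℕ) + 2 ≤ j → φ i * φ j = φ j * φ i) ∧
      ∃ ρ : PresentedGroup (braidRels m) →* MulAut (FreeGroup (Fin m)),
        ∀ i : Fin m, ρ (PresentedGroup.of i) = φ i := by
  classical
  refine ⟨Stmt11Aux.F, ?_, ?_, ?_, ?_, ?_, ?_, ?_⟩
  · intro i j hi hj; subst hj; exact Stmt11Aux.F0_fix hi
  · intro i j hi hj; exact Stmt11Aux.F0_mul hi hj
  · intro i j hj; exact ⟨Stmt11Aux.F_succ hj, Stmt11Aux.F_self hj⟩
  · intro i j hi h1 h2; exact Stmt11Aux.F_other hi h1 h2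
  · intro i j h; exact Stmt11Aux.braid_adj h
  · intro i j h; exact Stmt11Aux.braid_comm h
  · have hrel : ∀ r ∈ braidRels m, FreeGroup.lift Stmt11Aux.F r = 1 := by
      rintro r ⟨i, j, ⟨hij, rfl⟩ | ⟨hij, rfl⟩⟩
      · simp only [_root_.map_mul, _root_.map_inv, FreeGroup.lift_apply_of]
        exact mul_inv_eq_one.mpr (Stmt11Aux.braid_adj hij)
      · simp only [_root_.map_mul, _root_.map_inv, FreeGroup.lift_apply_of]
        rw [Stmt11Aux.braid_comm hij]
        group
    exact ⟨PresentedGroup.toGroup hrel, fun i => PresentedGroup.toGroup.of hrel⟩
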